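/- For every finite set of colors C and natural numbers n and k, there exists a number R(C, n) such that every C-coloring of the edges of the complete k-uniform hypergraph on R(C, n) vertices contains a set of n vertices all of whose k-element subsets receive the same color. -/

import Mathlib

/-- Infinite Ramsey theorem. -/
theorem infRamsey (C : Type) [Finite C] : ∀ (k : ℕ) (col : Finset ℕ → C) (S : Set ℕ),
    S.Infinite → ∃ T ⊆ S, T.Infinite ∧ ∃ c : C,
      ∀ e : Finset ℕ, ↑e ⊆ T → e.card = k → col e = c := by
  intro k
  induction k with
  | zero =>
    intro col S hS
    refine ⟨S, le_refl _, hS, col ∅, fun e _ he => ?_⟩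
    rw [Finset.card_eq_zero] at he; rw [he]
  | succ k ih =>
    intro col S hS
    -- one step of the construction
    have step : ∀ X : Set ℕ, X.Infinite → ∃ (Y : Set ℕ) (c : C),
        Y ⊆ X \ {sInf X} ∧ Y.Infinite ∧
        ∀ e : Finset ℕ, ↑e ⊆ Y → e.card = k → col (insert (sInf X) e) = c := by
      intro X hX
      have hX' : (X \ {sInf X}).Infinite := hX.diff (Set.finite_singleton _)
      obtain ⟨T, hTsub, hTinf, c, hc⟩ := ih (fun s => col (insert (sInf X) s)) _ hX'
      obtain ⟨e₀, he₀sub, he₀card⟩ := hTinf.exists_subset_card_eq k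
      exact ⟨T, col (insert (sInf X) e₀), hTsub, hTinf,
        fun e he hec => (hc e he hec).trans (hc e₀ he₀sub he₀card).symm⟩
    choose Y cf hYsub hYinf hom using step
    -- the sequence of sets
    let seq : ℕ → {X : Set ℕ // X.Infinite} := fun i =>
      Nat.rec ⟨S, hS⟩ (fun _ p => ⟨Y p.1 p.2, hYinf p.1 p.2⟩) i
    have seqsucc : ∀ i, (seq (i+1)).1 ⊆ (seq i).1 \ {sInf (seq i).1} :=
      fun i => hYsub _ _
    have seqmono : ∀ i j, i ≤ j → (seq j).1 ⊆ (seq i).1 := by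
      intro i j hij
      induction j, hij using Nat.le_induction with
      | base => exact subset_rfl
      | succ j hij ihj => exact subset_trans ((seqsucc j).trans Set.diff_subset) ihj
    set x : ℕ → ℕ := fun i => sInf (seq i).1 with hx
    have xmem : ∀ i, x i ∈ (seq i).1 := fun i => Nat.sInf_mem (seq i).2.nonempty
    have xlt : ∀ i j, i < j → x i < x j := by
      intro i j hij
      have h1 : x j ∈ (seq i).1 \ {x i} :=
        seqsucc i (seqmono (i+1) j hij (xmem j))
      exact lt_of_le_of_ne (Nat.sInf_le h1.1) (fun h => h1.2 h.symm)
    have xmono : StrictMono x := fun i j h => xlt i j h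
    -- pigeonhole on colors
    obtain ⟨c₀, hc₀⟩ := Finite.exists_infinite_fiber (fun i => cf (seq i).1 (seq i).2)
    have hI : ((fun i => cf (seq i).1 (seq i).2) ⁻¹' {c₀}).Infinite :=
      Set.infinite_coe_iff.mp hc₀
    set I := (fun i => cf (seq i).1 (seq i).2) ⁻¹' {c₀} with hIdef
    refine ⟨x '' I, ?_, hI.image (xmono.injective.injOn), c₀, ?_⟩
    · rintro _ ⟨i, _, rfl⟩; exact seqmono 0 i (Nat.zero_le i) (xmem i)
    · intro e hesub hecard
      have hne : e.Nonempty := Finset.card_pos.mp (by omega)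
      obtain ⟨i, hiI, hieq⟩ := hesub (e.min'_mem hne)
      have hrest : ∀ y ∈ e.erase (e.min' hne), y ∈ (seq (i+1)).1 := by
        intro y hy
        obtain ⟨j, hjI, hjeq⟩ := hesub (Finset.mem_of_mem_erase hy)
        have hylt : e.min' hne < y :=
          lt_of_le_of_ne (e.min'_le y (Finset.mem_of_mem_erase hy))
            (Ne.symm (Finset.ne_of_mem_erase hy))
        have : i < j := by
          by_contra h
          exact absurd (hjeq ▸ hieq ▸ hylt)
            (not_lt.mpr (xmono.le_iff_le.mpr (not_lt.mp h) : x j ≤ x i))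
        exact hjeq ▸ seqmono (i+1) j this (xmem j)
      have hcard' : (e.erase (e.min' hne)).card = k := by
        rw [Finset.card_erase_of_mem (e.min'_mem hne)]; omega
      have := hom (seq i).1 (seq i).2 (e.erase (e.min' hne))
        (fun y hy => hrest y hy) hcard'
      have hieq' : sInf ((seq i).1) = e.min' hne := hieq
      rw [hieq', Finset.insert_erase (e.min'_mem hne)] at this
      exact this.trans hiI


/-- **Ramsey's theorem for hypergraphs.** For every finite set of colors `C` and naturals
`n`, `k`, there is `R` such that every `C`-coloring of the `k`-element subsets of a set
of `R` vertices admits a set of `n` vertices all of whose `k`-element subsets get the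
same color. -/
theorem hypergraph_ramsey (C : Type) [Fintype C] (n k : ℕ) :
    ∃ R : ℕ, ∀ col : {e : Finset (Fin R) // e.card = k} → C,
      ∃ V : Finset (Fin R), V.card = n ∧
        ∀ e e' : {e : Finset (Fin R) // e.card = k},
          (e : Finset (Fin R)) ⊆ V → (e' : Finset (Fin R)) ⊆ V → col e = col e' := by
  cases isEmpty_or_nonempty C with
  | inl hE =>
    refine ⟨n, fun col => ?_⟩
    by_cases hk : k ≤ n
    · obtain ⟨t, _, ht⟩ := Finset.exists_subset_card_eq (s := (Finset.univ : Finset (Fin n))) (n := k)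
        (by simpa using hk)
      exact (hE.false (col ⟨t, ht⟩)).elim
    · refine ⟨Finset.univ, by simp, fun e e' he he' => ?_⟩
      have := e.2
      have hle := Finset.card_le_card (Finset.subset_univ e.1)
      simp only [Finset.card_univ, Fintype.card_fin] at hle
      omega
  | inr hNE =>
    by_contra hcon
    push_neg at hcon
    choose colR hbad using hcon
    -- limit coloring via ultrafilter
    set U : Ultrafilter ℕ := Filter.hyperfilter ℕ with hU
    have hlim : ∀ e : Finset ℕ, ∃ c : C,
        {R | (if h : (∀ m ∈ e, m < R) ∧ e.card = k then
            colR R ⟨e.attachFin h.1, by rw [Finset.card_attachFin]; exact h.2⟩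
          else Classical.arbitrary C) = c} ∈ U := by
      intro e
      have hcover : (⋃ c ∈ (Set.univ : Set C), {R | (if h : (∀ m ∈ e, m < R) ∧ e.card = k then
            colR R ⟨e.attachFin h.1, by rw [Finset.card_attachFin]; exact h.2⟩
          else Classical.arbitrary C) = c}) ∈ U := by
        have : (⋃ c ∈ (Set.univ : Set C), {R | (if h : (∀ m ∈ e, m < R) ∧ e.card = k then
            colR R ⟨e.attachFin h.1, by rw [Finset.card_attachFin]; exact h.2⟩
          else Classical.arbitrary C) = c}) = Set.univ := by
          ext R; simp
        rw [this]; exact Filter.univ_mem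
      obtain ⟨c, _, hc⟩ := (Ultrafilter.finite_biUnion_mem_iff Set.finite_univ).mp hcover
      exact ⟨c, hc⟩
    choose colL hcolL using hlim
    obtain ⟨T, _, hTinf, c₀, hc₀⟩ := infRamsey C k colL Set.univ Set.infinite_univ
    obtain ⟨W, hWsub, hWcard⟩ := hTinf.exists_subset_card_eq n
    -- the good set of R's
    have hGood : ((⋂ e ∈ (W.powersetCard k : Finset (Finset ℕ)),
        {R | (if h : (∀ m ∈ e, m < R) ∧ e.card = k then
            colR R ⟨e.attachFin h.1, by rw [Finset.card_attachFin]; exact h.2⟩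
          else Classical.arbitrary C) = c₀}) ∩ {R | ∀ m ∈ W, m < R}) ∈ U := by
      refine Filter.inter_mem ?_ ?_
      · rw [Filter.biInter_finset_mem]
        intro e he
        rw [Finset.mem_powersetCard] at he
        have : colL e = c₀ := hc₀ e (fun y hy => hWsub (he.1 hy)) he.2
        exact this ▸ hcolL e
      · have hmem : Set.Ioi (W.sup id) ∈ U := by
          apply Filter.hyperfilter_le_cofinite
          rw [Filter.mem_cofinite]
          have : (Set.Ioi (W.sup id))ᶜ = Set.Iic (W.sup id) := by ext; simp
          rw [this]; exact Set.finite_Iic _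
        refine Filter.mem_of_superset hmem (fun R hR m hm => ?_)
        exact lt_of_le_of_lt (Finset.le_sup (f := id) hm) hR
    obtain ⟨R, hRmem⟩ := Filter.nonempty_of_mem hGood
    obtain ⟨hR1, hR2⟩ := hRmem
    -- now derive a contradiction with badness of colR R
    have hWlt : ∀ m ∈ W, m < R := hR2
    set V : Finset (Fin R) := W.attachFin hWlt with hV
    have hVcard : V.card = n := by rw [hV, Finset.card_attachFin]; exact hWcard
    obtain ⟨e, e', hesub, he'sub, hne⟩ := hbad R V hVcard
    apply hne
    have key : ∀ E : {s : Finset (Fin R) // s.card = k}, (E : Finset (Fin R)) ⊆ V →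
        colR R E = c₀ := by
      intro E hEsub
      set eN : Finset ℕ := E.1.image Fin.val with heN
      have heNW : eN ⊆ W := by
        intro m hm
        rw [heN, Finset.mem_image] at hm
        obtain ⟨v, hv, rfl⟩ := hm
        exact (Finset.mem_attachFin hWlt).mp (hEsub hv)
      have heNcard : eN.card = k := by
        rw [heN, Finset.card_image_of_injective _ Fin.val_injective]; exact E.2
      have hmem : eN ∈ W.powersetCard k := Finset.mem_powersetCard.mpr ⟨heNW, heNcard⟩
      have hR1' := Set.mem_iInter₂.mp hR1 eN hmem
      have hcond : (∀ m ∈ eN, m < R) ∧ eN.card = k :=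
        ⟨fun m hm => hWlt m (heNW hm), heNcard⟩
      rw [Set.mem_setOf_eq, dif_pos hcond] at hR1'
      have hEeq : (⟨eN.attachFin hcond.1, by rw [Finset.card_attachFin]; exact hcond.2⟩ :
          {s : Finset (Fin R) // s.card = k}) = E := by
        apply Subtype.ext
        ext v
        rw [Finset.mem_attachFin, heN, Finset.mem_image]
        constructor
        · rintro ⟨w, hw, hwv⟩; rwa [← Fin.val_injective hwv]
        · intro hv; exact ⟨v, hv, rfl⟩
      rwa [hEeq] at hR1'
    rw [key e hesub, key e' he'sub]
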